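/- Let δ, p, q, α be real numbers with 0<δ<1, 2≤p<q and q<α+1, let X>0, Y≥0, A>0, λ>0 be reals and let B<0. Define σ(t)=X·t^{p−1−α}+Y·t^{q−1−α}−A·t^{−α−δ} and φ(t)=(X/p)·t^p+(Y/q)·t^q−(A/(1−δ))·t^{1−δ}−(λB/(α+1))·t^{α+1} for t>0, and let t_max be the unique critical point of σ. Then there exists a unique t₁>0 with σ(t₁)=λ·B; moreover t₁<t_max and σ′(t₁)>0. Consequently t₁ is the unique critical point of φ on (0,∞), φ″(t₁)>0, and φ(t₁)=inf_{t>0}φ(t), i.e. φ attains its global minimum over (0,∞) at t₁. -/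

import Mathlib

open Filter Set Topology

/-- when `B < 0`, there is a unique `t₁ > 0` with
`σ(t₁) = λ·B`; it satisfies `t₁ < t_max` and `σ′(t₁) > 0`, and it is the
unique critical point of the fibering map
`φ(t) = (X/p)·t^p + (Y/q)·t^q − (A/(1−δ))·t^{1−δ} − (λB/(α+1))·t^{α+1}`
on `(0,∞)`, with `φ″(t₁) > 0` and `φ(t₁) = inf_{t>0} φ(t)`. -/
theorem statement6
    (δ p q α X Y A lam B : ℝ)
    (hδ0 : 0 < δ) (hδ1 : δ < 1)
    (hp : 2 ≤ p) (hpq : p < q) (hq : q < α + 1)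
    (hX : 0 < X) (hY : 0 ≤ Y) (hA : 0 < A) (hlam : 0 < lam) (hB : B < 0)
    (σ φ : ℝ → ℝ)
    (hσ : ∀ t : ℝ, σ t = X * t ^ (p - 1 - α) + Y * t ^ (q - 1 - α)
        - A * t ^ (-α - δ))
    (hφ : ∀ t : ℝ, φ t = (X / p) * t ^ p + (Y / q) * t ^ q
        - (A / (1 - δ)) * t ^ (1 - δ)
        - (lam * B / (α + 1)) * t ^ (α + 1))
    (tmax : ℝ) (htmax : 0 < tmax)
    (heq : (α + 1 - p) * X * tmax ^ (p - 1 + δ)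
        + (α + 1 - q) * Y * tmax ^ (q - 1 + δ) = (α + δ) * A) :
    (∃! t₁ : ℝ, 0 < t₁ ∧ σ t₁ = lam * B) ∧
    (∀ t₁ : ℝ, 0 < t₁ → σ t₁ = lam * B →
      t₁ < tmax ∧
      0 < deriv σ t₁ ∧
      deriv φ t₁ = 0 ∧
      (∀ t : ℝ, 0 < t → deriv φ t = 0 → t = t₁) ∧
      0 < deriv (deriv φ) t₁ ∧
      (∀ t : ℝ, 0 < t → φ t₁ ≤ φ t)) := by
  have hp1 : (1:ℝ) < p := by linarith
  have hq1 : (1:ℝ) < q := by linarith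
  have hap : 0 < α + 1 - p := by linarith
  have haq : 0 < α + 1 - q := by linarith
  have hα1 : 1 < α := by linarith
  have had : 0 < α + δ := by linarith
  have hpd : 0 < p - 1 + δ := by linarith
  have hqd : 0 < q - 1 + δ := by linarith
  have hlB : lam * B < 0 := mul_neg_of_pos_of_neg hlam hB
  set g : ℝ → ℝ :=
    fun t => (α+1-p)*X*t^(p-1+δ) + (α+1-q)*Y*t^(q-1+δ) with hgdef
  -- derivative of σ
  have hσd : ∀ t : ℝ, 0 < t →
      HasDerivAt σ (t ^ (-α-δ-1) * ((α+δ)*A - g t)) t := by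
    intro t ht
    have h1 : HasDerivAt (fun s : ℝ => X * s ^ (p-1-α))
        (X * ((p-1-α) * t ^ (p-1-α-1))) t :=
      (Real.hasDerivAt_rpow_const (Or.inl ht.ne')).const_mul X
    have h2 : HasDerivAt (fun s : ℝ => Y * s ^ (q-1-α))
        (Y * ((q-1-α) * t ^ (q-1-α-1))) t :=
      (Real.hasDerivAt_rpow_const (Or.inl ht.ne')).const_mul Y
    have h3 : HasDerivAt (fun s : ℝ => A * s ^ (-α-δ))
        (A * ((-α-δ) * t ^ (-α-δ-1))) t :=
      (Real.hasDerivAt_rpow_const (Or.inl ht.ne')).const_mul A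
    have hfun : (fun s : ℝ => X * s ^ (p-1-α) + Y * s ^ (q-1-α)
        - A * s ^ (-α-δ)) = σ := by
      funext s; rw [hσ s]
    have h := (h1.add h2).sub h3
    change HasDerivAt (fun s : ℝ => X * s ^ (p-1-α) + Y * s ^ (q-1-α) - A * s ^ (-α-δ)) _ t at h; rw [hfun] at h
    convert h using 1
    have e1 : t ^ (p-1-α-1) = t ^ (-α-δ-1) * t ^ (p-1+δ) := by
      rw [← Real.rpow_add ht]; congr 1; ring
    have e2 : t ^ (q-1-α-1) = t ^ (-α-δ-1) * t ^ (q-1+δ) := by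
      rw [← Real.rpow_add ht]; congr 1; ring
    rw [e1, e2]; simp only [hgdef]; ring
  have hderivσ : ∀ t : ℝ, 0 < t →
      deriv σ t = t ^ (-α-δ-1) * ((α+δ)*A - g t) := fun t ht => (hσd t ht).deriv
  -- g is strictly increasing
  have hgmono : ∀ s t : ℝ, 0 ≤ s → s < t → g s < g t := by
    intro s t hs hst
    have h1 : s ^ (p-1+δ) < t ^ (p-1+δ) := Real.rpow_lt_rpow hs hst hpd
    have h2 : s ^ (q-1+δ) ≤ t ^ (q-1+δ) := Real.rpow_le_rpow hs hst.le hqd.le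
    have c1 : 0 < (α+1-p)*X := mul_pos hap hX
    have c2 : 0 ≤ (α+1-q)*Y := mul_nonneg haq.le hY
    simp only [hgdef]
    nlinarith
  have hgtmax : g tmax = (α+δ)*A := heq
  -- sign of deriv σ
  have hσd_pos : ∀ t : ℝ, 0 < t → t < tmax → 0 < deriv σ t := by
    intro t ht htm
    rw [hderivσ t ht]
    have : g t < (α+δ)*A := hgtmax ▸ hgmono t tmax ht.le htm
    exact mul_pos (Real.rpow_pos_of_pos ht _) (by linarith)
  have hσd_neg : ∀ t : ℝ, tmax < t → deriv σ t < 0 := by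
    intro t htm
    have ht : 0 < t := htmax.trans htm
    rw [hderivσ t ht]
    have : (α+δ)*A < g t := hgtmax ▸ hgmono tmax t htmax.le htm
    exact mul_neg_of_pos_of_neg (Real.rpow_pos_of_pos ht _) (by linarith)
  -- continuity
  have hσcont : ContinuousOn σ (Ioi 0) := fun t ht =>
    ((hσd t ht).differentiableAt.continuousAt).continuousWithinAt
  -- monotonicity of σ
  have hmono : StrictMonoOn σ (Ioc 0 tmax) := by
    apply strictMonoOn_of_deriv_pos (convex_Ioc 0 tmax)
      (hσcont.mono (fun x hx => hx.1))
    intro x hx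
    rw [interior_Ioc] at hx
    exact hσd_pos x hx.1 hx.2
  have hanti : StrictAntiOn σ (Ici tmax) := by
    apply strictAntiOn_of_deriv_neg (convex_Ici tmax)
      (hσcont.mono (fun x hx => lt_of_lt_of_le htmax hx))
    intro x hx
    rw [interior_Ici] at hx
    exact hσd_neg x hx
  -- σ tmax > 0
  have hσfactor : ∀ t : ℝ, 0 < t →
      σ t = t ^ (-α-δ) * (X * t^(p-1+δ) + Y * t^(q-1+δ) - A) := by
    intro t ht
    rw [hσ t]
    have e1 : t ^ (p-1-α) = t ^ (-α-δ) * t ^ (p-1+δ) := by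
      rw [← Real.rpow_add ht]; congr 1; ring
    have e2 : t ^ (q-1-α) = t ^ (-α-δ) * t ^ (q-1+δ) := by
      rw [← Real.rpow_add ht]; congr 1; ring
    rw [e1, e2]; ring
  have hσtmax : 0 < σ tmax := by
    rw [hσfactor tmax htmax]
    have hT1 : 0 < tmax ^ (p-1+δ) := Real.rpow_pos_of_pos htmax _
    have hT2 : 0 ≤ tmax ^ (q-1+δ) := (Real.rpow_pos_of_pos htmax _).le
    have key : (α+δ) * (X * tmax^(p-1+δ) + Y * tmax^(q-1+δ) - A)
        = (p-1+δ)*X*tmax^(p-1+δ) + (q-1+δ)*Y*tmax^(q-1+δ) := by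
      linear_combination heq
    have hin : 0 < X * tmax^(p-1+δ) + Y * tmax^(q-1+δ) - A := by
      nlinarith [mul_pos (mul_pos hpd hX) hT1,
        mul_nonneg (mul_nonneg hqd.le hY) hT2]
    exact mul_pos (Real.rpow_pos_of_pos htmax _) hin
  -- σ tends to 0 at infinity
  have htop : Tendsto σ atTop (𝓝 0) := by
    have hfun : σ = fun t : ℝ => X * t ^ (p-1-α) + Y * t ^ (q-1-α)
        - A * t ^ (-α-δ) := funext hσ
    have e1 : p - 1 - α = -(α+1-p) := by ring
    have e2 : q - 1 - α = -(α+1-q) := by ring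
    have e3 : -α - δ = -(α+δ) := by ring
    rw [hfun, e1, e2, e3]
    have h1 := (tendsto_rpow_neg_atTop hap).const_mul X
    have h2 := (tendsto_rpow_neg_atTop haq).const_mul Y
    have h3 := (tendsto_rpow_neg_atTop had).const_mul A
    have := (h1.add h2).sub h3
    simpa using this
  have hσnonneg : ∀ s : ℝ, tmax ≤ s → 0 ≤ σ s := by
    intro s hs
    refine le_of_tendsto htop ?_
    filter_upwards [eventually_gt_atTop s] with t ht
    exact (hanti hs (hs.trans ht.le) ht).le
  -- σ tends to -∞ at 0⁺
  have hbot : Tendsto σ (𝓝[>] (0:ℝ)) atBot := by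
    have f1 : Tendsto (fun t : ℝ => t ^ (-α-δ)) (𝓝[>] (0:ℝ)) atTop := by
      have h := (tendsto_rpow_atTop had).comp tendsto_inv_nhdsGT_zero
      apply h.congr'
      filter_upwards [self_mem_nhdsWithin] with t (ht : (0:ℝ) < t)
      show (t⁻¹) ^ (α+δ) = t ^ (-α-δ)
      rw [Real.inv_rpow ht.le, ← Real.rpow_neg ht.le]
      congr 1; ring
    have f2 : Tendsto (fun t : ℝ => X * t^(p-1+δ) + Y * t^(q-1+δ) - A)
        (𝓝[>] (0:ℝ)) (𝓝 (-A)) := by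
      have g1 : Tendsto (fun t : ℝ => t ^ (p-1+δ)) (𝓝[>] (0:ℝ)) (𝓝 0) := by
        have := (Real.continuousAt_rpow_const 0 (p-1+δ) (Or.inr hpd.le)).tendsto
        rw [Real.zero_rpow hpd.ne'] at this
        exact this.mono_left nhdsWithin_le_nhds
      have g2 : Tendsto (fun t : ℝ => t ^ (q-1+δ)) (𝓝[>] (0:ℝ)) (𝓝 0) := by
        have := (Real.continuousAt_rpow_const 0 (q-1+δ) (Or.inr hqd.le)).tendsto
        rw [Real.zero_rpow hqd.ne'] at this
        exact this.mono_left nhdsWithin_le_nhds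
      have := ((g1.const_mul X).add (g2.const_mul Y)).sub
        (tendsto_const_nhds : Tendsto (fun _ : ℝ => A) (𝓝[>] (0:ℝ)) (𝓝 A))
      simpa using this
    have h := f1.atTop_mul_neg (by linarith : -A < 0) f2
    apply h.congr'
    filter_upwards [self_mem_nhdsWithin] with t (ht : (0:ℝ) < t)
    exact (hσfactor t ht).symm
  -- existence of a point below lam*B
  obtain ⟨t₀, ht₀lt, ht₀mem⟩ :
      ∃ t₀ : ℝ, σ t₀ < lam * B ∧ t₀ ∈ Ioo (0:ℝ) tmax := by
    have h1 : ∀ᶠ t in 𝓝[>] (0:ℝ), σ t < lam * B :=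
      hbot.eventually (eventually_lt_atBot _)
    have h2 : Ioo (0:ℝ) tmax ∈ 𝓝[>] (0:ℝ) :=
      Ioo_mem_nhdsGT_of_mem ⟨le_refl 0, htmax⟩
    exact (h1.and (eventually_of_mem h2 (fun x hx => hx))).exists
  -- existence of t₁
  obtain ⟨t₁', ht₁'mem, ht₁'eq⟩ : ∃ t ∈ Icc t₀ tmax, σ t = lam * B := by
    have hsub : Icc t₀ tmax ⊆ Ioi 0 := fun x hx => lt_of_lt_of_le ht₀mem.1 hx.1
    have := intermediate_value_Icc (le_of_lt ht₀mem.2) (hσcont.mono hsub)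
    have hmem : lam * B ∈ Icc (σ t₀) (σ tmax) := ⟨ht₀lt.le, by linarith⟩
    obtain ⟨t, htmem, hteq⟩ := this hmem
    exact ⟨t, htmem, hteq⟩
  have ht₁'pos : 0 < t₁' := lt_of_lt_of_le ht₀mem.1 ht₁'mem.1
  -- any solution is < tmax
  have hlt_tmax : ∀ s : ℝ, 0 < s → σ s = lam * B → s < tmax := by
    intro s hs hseq
    by_contra h
    push_neg at h
    have := hσnonneg s h
    linarith
  -- uniqueness of solutions
  have huniq : ∀ s u : ℝ, 0 < s → 0 < u → σ s = lam * B → σ u = lam * B →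
      s = u := by
    intro s u hs hu hseq hueq
    have hs' : s ∈ Ioc 0 tmax := ⟨hs, (hlt_tmax s hs hseq).le⟩
    have hu' : u ∈ Ioc 0 tmax := ⟨hu, (hlt_tmax u hu hueq).le⟩
    exact hmono.injOn hs' hu' (hseq.trans hueq.symm)
  -- derivative of φ
  have hφd : ∀ t : ℝ, 0 < t →
      HasDerivAt φ (t ^ α * (σ t - lam * B)) t := by
    intro t ht
    have h1 : HasDerivAt (fun s : ℝ => (X/p) * s ^ p)
        ((X/p) * (p * t ^ (p-1))) t :=
      (Real.hasDerivAt_rpow_const (Or.inl ht.ne')).const_mul (X/p)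
    have h2 : HasDerivAt (fun s : ℝ => (Y/q) * s ^ q)
        ((Y/q) * (q * t ^ (q-1))) t :=
      (Real.hasDerivAt_rpow_const (Or.inl ht.ne')).const_mul (Y/q)
    have h3 : HasDerivAt (fun s : ℝ => (A/(1-δ)) * s ^ (1-δ))
        ((A/(1-δ)) * ((1-δ) * t ^ (1-δ-1))) t :=
      (Real.hasDerivAt_rpow_const (Or.inl ht.ne')).const_mul (A/(1-δ))
    have h4 : HasDerivAt (fun s : ℝ => (lam*B/(α+1)) * s ^ (α+1))
        ((lam*B/(α+1)) * ((α+1) * t ^ (α+1-1))) t :=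
      (Real.hasDerivAt_rpow_const (Or.inl ht.ne')).const_mul (lam*B/(α+1))
    have hfun : (fun s : ℝ => (X/p) * s ^ p + (Y/q) * s ^ q
        - (A/(1-δ)) * s ^ (1-δ) - (lam*B/(α+1)) * s ^ (α+1)) = φ := by
      funext s; rw [hφ s]
    have h := ((h1.add h2).sub h3).sub h4
    change HasDerivAt (fun s : ℝ => (X/p) * s ^ p + (Y/q) * s ^ q - (A/(1-δ)) * s ^ (1-δ) - (lam*B/(α+1)) * s ^ (α+1)) _ t at h; rw [hfun] at h
    convert h using 1
    rw [hσ t]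
    have e1 : t ^ α * t ^ (p-1-α) = t ^ (p-1) := by
      rw [← Real.rpow_add ht]; congr 1; ring
    have e2 : t ^ α * t ^ (q-1-α) = t ^ (q-1) := by
      rw [← Real.rpow_add ht]; congr 1; ring
    have e3 : t ^ α * t ^ (-α-δ) = t ^ (1-δ-1) := by
      rw [← Real.rpow_add ht]; congr 1; ring
    have e4 : t ^ (α+1-1) = t ^ α := by congr 1; ring
    have hpne : p ≠ 0 := by positivity
    have hqne : q ≠ 0 := by positivity
    have hδne : (1:ℝ) - δ ≠ 0 := by linarith
    have hαne : α + 1 ≠ 0 := by positivity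
    have r1 : X/p*(p*t^(p-1)) = X * t^(p-1) := by field_simp
    have r2 : Y/q*(q*t^(q-1)) = Y * t^(q-1) := by field_simp
    have r3 : A/(1-δ)*((1-δ)*t^(1-δ-1)) = A * t^(1-δ-1) := by field_simp
    have r4 : lam*B/(α+1)*((α+1)*t^(α+1-1)) = lam*B*t^(α+1-1) := by
      field_simp
    rw [r1, r2, r3, r4, e4, ← e1, ← e2, ← e3]
    ring
  have hderivφ : ∀ t : ℝ, 0 < t →
      deriv φ t = t ^ α * (σ t - lam * B) := fun t ht => (hφd t ht).deriv
  have hφcont : ContinuousOn φ (Ioi 0) := fun t ht =>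
    ((hφd t ht).differentiableAt.continuousAt).continuousWithinAt
  constructor
  · exact ⟨t₁', ⟨ht₁'pos, ht₁'eq⟩,
      fun u hu => huniq u t₁' hu.1 ht₁'pos hu.2 ht₁'eq⟩
  intro t₁ ht₁pos ht₁eq
  have ht₁lt : t₁ < tmax := hlt_tmax t₁ ht₁pos ht₁eq
  have hσd₁ : 0 < deriv σ t₁ := hσd_pos t₁ ht₁pos ht₁lt
  refine ⟨ht₁lt, hσd₁, ?_, ?_, ?_, ?_⟩
  · rw [hderivφ t₁ ht₁pos, ht₁eq]; ring
  · intro t ht hdt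
    rw [hderivφ t ht] at hdt
    have htα : t ^ α ≠ 0 := (Real.rpow_pos_of_pos ht α).ne'
    have : σ t = lam * B := by
      rcases mul_eq_zero.mp hdt with h | h
      · exact absurd h htα
      · linarith
    exact huniq t t₁ ht ht₁pos this ht₁eq
  · -- second derivative positive
    set ψ : ℝ → ℝ := fun t => t ^ α * (σ t - lam * B) with hψdef
    have hψd : HasDerivAt ψ
        (α * t₁ ^ (α-1) * (σ t₁ - lam * B) + t₁ ^ α * deriv σ t₁) t₁ := by
      have ha : HasDerivAt (fun s : ℝ => s ^ α) (α * t₁ ^ (α-1)) t₁ :=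
        Real.hasDerivAt_rpow_const (Or.inl ht₁pos.ne')
      have hb : HasDerivAt (fun s : ℝ => σ s - lam * B) (deriv σ t₁) t₁ := by
        rw [hderivσ t₁ ht₁pos]
        exact (hσd t₁ ht₁pos).sub_const _
      exact ha.mul hb
    have heqv : deriv φ =ᶠ[𝓝 t₁] ψ := by
      filter_upwards [IsOpen.mem_nhds isOpen_Ioi ht₁pos] with t ht
      exact hderivφ t ht
    have : deriv (deriv φ) t₁ = deriv ψ t₁ := heqv.deriv_eq
    rw [this, hψd.deriv, ht₁eq]
    have : α * t₁ ^ (α-1) * (lam * B - lam * B) = 0 := by ring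
    rw [this, zero_add]
    exact mul_pos (Real.rpow_pos_of_pos ht₁pos α) hσd₁
  · -- global minimum
    intro t ht
    rcases lt_trichotomy t t₁ with hlt | heqc | hgt
    · have hsub : Icc t t₁ ⊆ Ioi 0 := fun x hx => lt_of_lt_of_le ht hx.1
      have hA' : StrictAntiOn φ (Icc t t₁) := by
        apply strictAntiOn_of_deriv_neg (convex_Icc t t₁) (hφcont.mono hsub)
        intro s hs
        rw [interior_Icc] at hs
        have hs0 : 0 < s := ht.trans hs.1
        have hstm : s < tmax := hs.2.trans ht₁lt
        have : σ s < σ t₁ := hmono ⟨hs0, hstm.le⟩ ⟨ht₁pos, ht₁lt.le⟩ hs.2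
        rw [hderivφ s hs0]
        exact mul_neg_of_pos_of_neg (Real.rpow_pos_of_pos hs0 α)
          (by rw [ht₁eq] at this; linarith)
      exact (hA' (left_mem_Icc.mpr hlt.le) (right_mem_Icc.mpr hlt.le) hlt).le
    · rw [heqc]
    · have hsub : Icc t₁ t ⊆ Ioi 0 := fun x hx => lt_of_lt_of_le ht₁pos hx.1
      have hM : StrictMonoOn φ (Icc t₁ t) := by
        apply strictMonoOn_of_deriv_pos (convex_Icc t₁ t) (hφcont.mono hsub)
        intro s hs
        rw [interior_Icc] at hs
        have hs0 : 0 < s := ht₁pos.trans hs.1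
        have : lam * B < σ s := by
          rcases le_or_gt s tmax with h | h
          · have := hmono ⟨ht₁pos, ht₁lt.le⟩ ⟨hs0, h⟩ hs.1
            rw [ht₁eq] at this; exact this
          · have := hσnonneg s h.le
            linarith
        rw [hderivφ s hs0]
        exact mul_pos (Real.rpow_pos_of_pos hs0 α) (by linarith)
      exact (hM (left_mem_Icc.mpr hgt.le) (right_mem_Icc.mpr hgt.le) hgt).le
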